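/- Let a finite DTMDP with uniformisation rate q > 0, time bound t ≥ 0, reward structure (c, f) and ε > 0 be given, and let k ∈ ℕ be ε-sufficient. Then for every counting randomised (CR) scheduler σ and every initial state s0, the value-iteration output satisfies |q_0(s0) − V(σ, s0)| < ε, where q_0 is the value-iteration vector of σ at index 0 (computed down from q_{k+1} ≡ 0); moreover 0 ≤ V(σ, s0) − q_0(s0). -/

import Mathlib

open scoped BigOperators

namespace TR

variable {S A : Type} [Fintype S] [Fintype A] [DecidableEq S] [DecidableEq A]

/-- Poisson probabilities `φ_λ(i) = λ^i/i! · e^{−λ}`. -/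
noncomputable def phi (lam : ℝ) (i : ℕ) : ℝ :=
  lam ^ i / (Nat.factorial i : ℝ) * Real.exp (-lam)

/-- `ψ_λ(i) = 1 − Σ_{j=0}^{i} φ_λ(j)`. -/
noncomputable def psi (lam : ℝ) (i : ℕ) : ℝ :=
  1 - ∑ j ∈ Finset.range (i + 1), phi lam j

/-- Action `a` is enabled in state `s`. -/
def Enabled (P : S → A → S → ℝ) (s : S) (a : A) : Prop :=
  ∑ s', P s a s' = 1

/-- `P` is the transition function of a finite DTMDP. -/
def IsDTMDP (P : S → A → S → ℝ) : Prop :=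
  (∀ s a s', 0 ≤ P s a s') ∧
  (∀ s a, (∑ s', P s a s') = 0 ∨ (∑ s', P s a s') = 1) ∧
  (∀ s, ∃ a, Enabled P s a)

/-- History-dependent randomised scheduler.  A history is encoded as a pair of
a list of (state, action) pairs (most recent first) and the current state. -/
def IsHR (P : S → A → S → ℝ) (sch : List (S × A) × S → A → ℝ) : Prop :=
  (∀ h a, 0 ≤ sch h a) ∧ (∀ h, ∑ a, sch h a = 1) ∧
  (∀ h a, 0 < sch h a → Enabled P h.2 a)

/-- Probability of the path recorded in the given history (of length `n`,
starting at `s0`) under the HR scheduler `sch`. -/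
noncomputable def hrHistProb (P : S → A → S → ℝ) (sch : List (S × A) × S → A → ℝ)
    (s0 : S) : ℕ → List (S × A) × S → ℝ
  | 0, h => if h.1 = [] ∧ h.2 = s0 then 1 else 0
  | _ + 1, ([], _) => 0
  | n + 1, ((s, a) :: rest, s') =>
      hrHistProb P sch s0 n (rest, s) * sch (rest, s) a * P s a s'

/-- Transient probability `tprob^σ(s0, n, s)`: total probability of all paths of
length `n` from `s0` ending in `s`. -/
noncomputable def hrProb (P : S → A → S → ℝ) (sch : List (S × A) × S → A → ℝ)
    (s0 : S) (n : ℕ) (s : S) : ℝ :=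
  ∑' l : List (S × A), hrHistProb P sch s0 n (l, s)

/-- Counting randomised scheduler. -/
def IsCR (P : S → A → S → ℝ) (sch : S → ℕ → A → ℝ) : Prop :=
  (∀ s n a, 0 ≤ sch s n a) ∧ (∀ s n, ∑ a, sch s n a = 1) ∧
  (∀ s n a, 0 < sch s n a → Enabled P s a)

/-- Transient distribution of a CR scheduler. -/
noncomputable def crProb (P : S → A → S → ℝ) (sch : S → ℕ → A → ℝ) (s0 : S) :
    ℕ → S → ℝ
  | 0 => fun s => if s = s0 then 1 else 0
  | n + 1 => fun s' => ∑ s, crProb P sch s0 n s * ∑ a, sch s n a * P s a s'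

/-- Counting deterministic scheduler. -/
def IsCD (P : S → A → S → ℝ) (d : S → ℕ → A) : Prop :=
  ∀ s n, Enabled P s (d s n)

/-- Transient distribution of a CD scheduler. -/
noncomputable def cdProb (P : S → A → S → ℝ) (d : S → ℕ → A) (s0 : S) :
    ℕ → S → ℝ
  | 0 => fun s => if s = s0 then 1 else 0
  | n + 1 => fun s' => ∑ s, cdProb P d s0 n s * P s (d s n) s'

/-- The value `V = Σ_i [ φ_{qt}(i)·Σ_s p_i(s)·f(s) + ψ_{qt}(i)·Σ_s p_i(s)·c(s)/q ]`
of transient distributions `p` w.r.t. uniformisation rate `q`, time bound `t`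
and rewards `(c, f)`. -/
noncomputable def value (q t : ℝ) (c f : S → ℝ) (p : ℕ → S → ℝ) : ℝ :=
  ∑' i : ℕ, (phi (q * t) i * ∑ s, p i s * f s
    + psi (q * t) i * ∑ s, p i s * (c s / q))

/-- Value-iteration vectors of a CR scheduler: `crVI … k j` is `q_{k+1-j}`,
i.e. `crVI … k 0 = q_{k+1} ≡ 0` and `crVI … k (k+1) = q_0`. -/
noncomputable def crVI (P : S → A → S → ℝ) (sch : S → ℕ → A → ℝ)
    (q t : ℝ) (c f : S → ℝ) (k : ℕ) : ℕ → S → ℝ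
  | 0 => fun _ => 0
  | j + 1 => fun s =>
      (∑ a, sch s (k - j) a * ∑ s', P s a s' * crVI P sch q t c f k j s')
      + phi (q * t) (k - j) * f s + psi (q * t) (k - j) * (c s / q)

/-- Maximising value-iteration vectors: `maxVI … k j` is `q'_{k+1-j}`,
i.e. `maxVI … k 0 = q'_{k+1} ≡ 0` and `maxVI … k (k+1) = q'_0`. -/
noncomputable def maxVI (P : S → A → S → ℝ)
    (q t : ℝ) (c f : S → ℝ) (k : ℕ) : ℕ → S → ℝ
  | 0 => fun _ => 0
  | j + 1 => fun s =>
      sSup {x : ℝ | ∃ a, Enabled P s a ∧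
        x = ∑ s', P s a s' * maxVI P q t c f k j s'}
      + phi (q * t) (k - j) * f s + psi (q * t) (k - j) * (c s / q)

/-- Maximum of a real-valued function on a finite nonempty type. -/
noncomputable def maxOf [Nonempty S] (g : S → ℝ) : ℝ :=
  Finset.univ.sup' Finset.univ_nonempty g

/-- `k` is `ε`-sufficient: `Σ_{n=0}^{k} ψ_{qt}(n) > qt − ε·q/(2·max_s c(s))`
(dropped if `max_s c(s) = 0`) and `ψ_{qt}(k)·max_s f(s) < ε/2`. -/
def EpsSufficient [Nonempty S] (q t : ℝ) (c f : S → ℝ) (ε : ℝ) (k : ℕ) : Prop :=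
  (maxOf c = 0 ∨
    (∑ n ∈ Finset.range (k + 1), psi (q * t) n) > q * t - ε * q / (2 * maxOf c)) ∧
  psi (q * t) k * maxOf f < ε / 2

/-- `n`-step transition probabilities (matrix powers) of a stochastic matrix. -/
noncomputable def matPow (P : S → S → ℝ) : ℕ → S → S → ℝ
  | 0 => fun s s' => if s = s' then 1 else 0
  | n + 1 => fun s s' => ∑ s'', matPow P n s s'' * P s'' s'

/-- `part` is a partition of the finite state set `S`. -/
def IsPartition (part : Finset (Finset S)) : Prop :=
  (∀ z ∈ part, z.Nonempty) ∧ (∀ s : S, ∃ z ∈ part, s ∈ z) ∧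
  (∀ z ∈ part, ∀ z' ∈ part, z ≠ z' → Disjoint z z')

/-- Abstraction DTMDP of a stochastic matrix w.r.t. a partition: states are
blocks, actions are concrete states, `P̄(z, s, z') = Σ_{s' ∈ z'} P(s,s')` if
`s ∈ z` and `0` otherwise. -/
noncomputable def abst (P : S → S → ℝ) (part : Finset (Finset S)) :
    {z // z ∈ part} → S → {z // z ∈ part} → ℝ :=
  fun z s z' => if s ∈ z.1 then ∑ s' ∈ z'.1, P s s' else 0


lemma phi_nonneg {lam : ℝ} (h : 0 ≤ lam) (i : ℕ) : 0 ≤ phi lam i := by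
  unfold phi; positivity

lemma hasSum_phi (lam : ℝ) : HasSum (phi lam) 1 := by
  have h := (NormedSpace.expSeries_div_hasSum_exp lam).mul_right (Real.exp (-lam))
  rw [← Real.exp_eq_exp_ℝ, ← Real.exp_add, add_neg_cancel, Real.exp_zero] at h
  exact h

lemma psi_eq_tsum (lam : ℝ) (i : ℕ) : psi lam i = ∑' j, phi lam (j + (i + 1)) := by
  have h := Summable.sum_add_tsum_nat_add (f := phi lam) (i + 1) (hasSum_phi lam).summable
  rw [(hasSum_phi lam).tsum_eq] at h
  unfold psi; linarith

lemma summable_phi_shift (lam : ℝ) (m : ℕ) : Summable (fun j => phi lam (j + m)) :=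
  ((summable_nat_add_iff m).2 (hasSum_phi lam).summable)

lemma psi_nonneg {lam : ℝ} (h : 0 ≤ lam) (i : ℕ) : 0 ≤ psi lam i := by
  rw [psi_eq_tsum]
  exact tsum_nonneg fun j => phi_nonneg h _

lemma psi_succ (lam : ℝ) (m : ℕ) : psi lam m = psi lam (m + 1) + phi lam (m + 1) := by
  unfold psi
  rw [Finset.sum_range_succ (n := m + 1)]
  ring

lemma hasSum_id_mul_phi (lam : ℝ) : HasSum (fun j : ℕ => (j : ℝ) * phi lam j) lam := by
  have key : (fun j : ℕ => ((j : ℝ) + 1) * phi lam (j + 1)) = fun j : ℕ => lam * phi lam j := by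
    funext j
    unfold phi
    rw [pow_succ, Nat.factorial_succ]
    push_cast
    have h1 : (j.factorial : ℝ) ≠ 0 := Nat.cast_ne_zero.2 (Nat.factorial_ne_zero j)
    field_simp
  have h : HasSum (fun j : ℕ => ((j : ℝ) + 1) * phi lam (j + 1)) lam := by
    rw [key]
    simpa using (hasSum_phi lam).mul_left lam
  have h2 := (hasSum_nat_add_iff (f := fun j : ℕ => (j : ℝ) * phi lam j) 1).1 (by push_cast; exact h)
  simpa using h2

lemma summable_id_mul_phi_shift (lam : ℝ) (m : ℕ) :
    Summable (fun j : ℕ => ((j + m : ℕ) : ℝ) * phi lam (j + m)) :=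
  (summable_nat_add_iff (f := fun j : ℕ => (j : ℝ) * phi lam j) m).2
    (hasSum_id_mul_phi lam).summable

lemma sum_psi_eq (lam : ℝ) (m : ℕ) :
    ∑ n ∈ Finset.range (m + 1), psi lam n
      = ∑ j ∈ Finset.range (m + 1), (j : ℝ) * phi lam j + ((m : ℝ) + 1) * psi lam m := by
  induction m with
  | zero => simp
  | succ m ih =>
    rw [Finset.sum_range_succ (n := m + 1), ih, Finset.sum_range_succ (n := m + 1),
      psi_succ lam m]
    push_cast
    ring

lemma mul_psi_le {lam : ℝ} (h : 0 ≤ lam) (m : ℕ) :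
    ((m : ℝ) + 1) * psi lam m ≤ ∑' j, ((j + (m + 1) : ℕ) : ℝ) * phi lam (j + (m + 1)) := by
  rw [psi_eq_tsum, ← tsum_mul_left]
  refine Summable.tsum_le_tsum (fun j => ?_) ((summable_phi_shift lam (m + 1)).mul_left _)
    (summable_id_mul_phi_shift lam (m + 1))
  have hφ := phi_nonneg h (j + (m + 1))
  have hle : ((m : ℝ) + 1) ≤ ((j + (m + 1) : ℕ) : ℝ) := by
    push_cast; linarith [Nat.cast_nonneg (α := ℝ) j]
  exact mul_le_mul_of_nonneg_right hle hφ

lemma sum_psi_le {lam : ℝ} (h : 0 ≤ lam) (N : ℕ) :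
    ∑ n ∈ Finset.range N, psi lam n ≤ lam := by
  cases N with
  | zero => simpa using h
  | succ m =>
    rw [sum_psi_eq]
    have h1 := mul_psi_le h m
    have h2 := Summable.sum_add_tsum_nat_add (f := fun j : ℕ => (j : ℝ) * phi lam j) (m + 1)
      (hasSum_id_mul_phi lam).summable
    rw [(hasSum_id_mul_phi lam).tsum_eq] at h2
    linarith

lemma summable_psi {lam : ℝ} (h : 0 ≤ lam) : Summable (psi lam) :=
  summable_of_sum_range_le (psi_nonneg h) (sum_psi_le h)

lemma tsum_psi_le {lam : ℝ} (h : 0 ≤ lam) : ∑' n, psi lam n ≤ lam :=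
  Real.tsum_le_of_sum_range_le (psi_nonneg h) (sum_psi_le h)



lemma crProb_nonneg (P : S → A → S → ℝ) (hP : IsDTMDP P) (sch : S → ℕ → A → ℝ)
    (hsch : IsCR P sch) (s0 : S) : ∀ n s, 0 ≤ crProb P sch s0 n s := by
  intro n
  induction n with
  | zero =>
    intro s
    simp only [crProb]
    split <;> norm_num
  | succ n ih =>
    intro s'
    simp only [crProb]
    refine Finset.sum_nonneg fun s _ => mul_nonneg (ih s) ?_
    exact Finset.sum_nonneg fun a _ => mul_nonneg (hsch.1 s n a) (hP.1 s a s')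

lemma sch_mul_sumP (P : S → A → S → ℝ) (sch : S → ℕ → A → ℝ)
    (hsch : IsCR P sch) (s : S) (n : ℕ) (a : A) :
    sch s n a * ∑ s', P s a s' = sch s n a := by
  rcases (hsch.1 s n a).eq_or_lt with h | h
  · rw [← h]; ring
  · rw [hsch.2.2 s n a h, mul_one]

lemma crProb_mass (P : S → A → S → ℝ) (hP : IsDTMDP P) (sch : S → ℕ → A → ℝ)
    (hsch : IsCR P sch) (s0 : S) : ∀ n, ∑ s, crProb P sch s0 n s = 1 := by
  intro n
  induction n with
  | zero => simp [crProb]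
  | succ n ih =>
    simp only [crProb]
    rw [Finset.sum_comm]
    calc ∑ s, ∑ s', crProb P sch s0 n s * ∑ a, sch s n a * P s a s'
        = ∑ s, crProb P sch s0 n s * ∑ a, sch s n a * ∑ s', P s a s' := by
          refine Finset.sum_congr rfl fun s _ => ?_
          rw [← Finset.mul_sum, Finset.sum_comm]
          simp only [← Finset.mul_sum]
      _ = ∑ s, crProb P sch s0 n s * ∑ a, sch s n a := by
          simp only [sch_mul_sumP P sch hsch]
      _ = 1 := by simp only [hsch.2.1, mul_one]; exact ih

lemma crProb_step (P : S → A → S → ℝ) (sch : S → ℕ → A → ℝ) (s0 : S) (m : ℕ)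
    (g : S → ℝ) :
    ∑ s, crProb P sch s0 m s * ∑ a, sch s m a * ∑ s', P s a s' * g s'
      = ∑ s', crProb P sch s0 (m + 1) s' * g s' := by
  conv_rhs => simp only [crProb]
  calc ∑ s, crProb P sch s0 m s * ∑ a, sch s m a * ∑ s', P s a s' * g s'
      = ∑ s, ∑ s', (∑ a, crProb P sch s0 m s * (sch s m a * P s a s')) * g s' := by
        refine Finset.sum_congr rfl fun s _ => ?_
        simp only [Finset.mul_sum]
        rw [Finset.sum_comm]
        refine Finset.sum_congr rfl fun s' _ => ?_
        rw [Finset.sum_mul]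
        exact Finset.sum_congr rfl fun a _ => by ring
    _ = ∑ s', (∑ s, crProb P sch s0 m s * ∑ a, sch s m a * P s a s') * g s' := by
        rw [Finset.sum_comm]
        refine Finset.sum_congr rfl fun s' _ => ?_
        rw [Finset.sum_mul]
        refine Finset.sum_congr rfl fun s _ => ?_
        rw [Finset.mul_sum]

lemma crVI_dot (P : S → A → S → ℝ) (hP : IsDTMDP P) (q t : ℝ) (c f : S → ℝ)
    (sch : S → ℕ → A → ℝ) (hsch : IsCR P sch) (s0 : S) (k : ℕ) :
    ∀ j, j ≤ k + 1 →
      ∑ s, crProb P sch s0 (k + 1 - j) s * crVI P sch q t c f k j s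
        = ∑ n ∈ Finset.Ico (k + 1 - j) (k + 1),
            (phi (q * t) n * ∑ s, crProb P sch s0 n s * f s
              + psi (q * t) n * ∑ s, crProb P sch s0 n s * (c s / q)) := by
  intro j
  induction j with
  | zero => simp [crVI]
  | succ j ih =>
    intro hj
    have hjk : j ≤ k := Nat.lt_succ_iff.mp hj
    have h1 : k + 1 - (j + 1) = k - j := by omega
    have h2 : k + 1 - j = (k - j) + 1 := by omega
    have hlt : k - j < k + 1 := by omega
    rw [h1]
    simp only [crVI]
    have expand : ∑ s, crProb P sch s0 (k - j) s *
        ((∑ a, sch s (k - j) a * ∑ s', P s a s' * crVI P sch q t c f k j s')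
          + phi (q * t) (k - j) * f s + psi (q * t) (k - j) * (c s / q))
        = (∑ s, crProb P sch s0 (k - j) s *
            ∑ a, sch s (k - j) a * ∑ s', P s a s' * crVI P sch q t c f k j s')
          + (phi (q * t) (k - j) * (∑ s, crProb P sch s0 (k - j) s * f s)
            + psi (q * t) (k - j) * (∑ s, crProb P sch s0 (k - j) s * (c s / q))) := by
      rw [Finset.mul_sum, Finset.mul_sum, ← Finset.sum_add_distrib, ← Finset.sum_add_distrib]
      exact Finset.sum_congr rfl fun s _ => by ring
    rw [expand, crProb_step, ← h2, ih (by omega), Finset.sum_eq_sum_Ico_succ_bot hlt, ← h2]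
    ring


/-- for an ε-sufficient `k`, value iteration for a CR scheduler
(`crVI … k (k+1)` is `q_0`) approximates its value from below within `ε`. -/
theorem stmt9 {S A : Type} [Fintype S] [Nonempty S] [Fintype A]
    [DecidableEq S] [DecidableEq A]
    (P : S → A → S → ℝ) (hP : IsDTMDP P)
    (q t : ℝ) (hq : 0 < q) (ht : 0 ≤ t)
    (c f : S → ℝ) (hc : ∀ s, 0 ≤ c s) (hf : ∀ s, 0 ≤ f s)
    (ε : ℝ) (hε : 0 < ε) (k : ℕ) (hk : EpsSufficient q t c f ε k)
    (sch : S → ℕ → A → ℝ) (hsch : IsCR P sch) :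
    ∀ s0 : S,
      |crVI P sch q t c f k (k + 1) s0 - value q t c f (crProb P sch s0)| < ε ∧
      0 ≤ value q t c f (crProb P sch s0) - crVI P sch q t c f k (k + 1) s0 := by
    intro s0
    have hlam0 : 0 ≤ q * t := mul_nonneg hq.le ht
    set lam : ℝ := q * t with hlam
    set p := crProb P sch s0 with hp
    set g : ℕ → ℝ := fun n => phi lam n * ∑ s, p n s * f s
      + psi lam n * ∑ s, p n s * (c s / q) with hg
    have hpn : ∀ n s, 0 ≤ p n s := crProb_nonneg P hP sch hsch s0
    have hpm : ∀ n, ∑ s, p n s = 1 := crProb_mass P hP sch hsch s0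
    have hMf : ∀ s, f s ≤ maxOf f := fun s => Finset.le_sup' f (Finset.mem_univ s)
    have hMc : ∀ s, c s ≤ maxOf c := fun s => Finset.le_sup' c (Finset.mem_univ s)
    have hMf0 : 0 ≤ maxOf f := le_trans (hf (Classical.arbitrary S)) (hMf _)
    have hMc0 : 0 ≤ maxOf c := le_trans (hc (Classical.arbitrary S)) (hMc _)
    have hF : ∀ n, ∑ s, p n s * f s ≤ maxOf f := by
      intro n
      calc ∑ s, p n s * f s ≤ ∑ s, p n s * maxOf f :=
            Finset.sum_le_sum fun s _ => mul_le_mul_of_nonneg_left (hMf s) (hpn n s)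
        _ = maxOf f := by rw [← Finset.sum_mul, hpm n, one_mul]
    have hC : ∀ n, ∑ s, p n s * (c s / q) ≤ maxOf c / q := by
      intro n
      calc ∑ s, p n s * (c s / q) ≤ ∑ s, p n s * (maxOf c / q) :=
            Finset.sum_le_sum fun s _ => mul_le_mul_of_nonneg_left
              (div_le_div_of_nonneg_right (hMc s) hq.le) (hpn n s)
        _ = maxOf c / q := by rw [← Finset.sum_mul, hpm n, one_mul]
    have hF0 : ∀ n, 0 ≤ ∑ s, p n s * f s :=
      fun n => Finset.sum_nonneg fun s _ => mul_nonneg (hpn n s) (hf s)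
    have hC0 : ∀ n, 0 ≤ ∑ s, p n s * (c s / q) :=
      fun n => Finset.sum_nonneg fun s _ => mul_nonneg (hpn n s) (div_nonneg (hc s) hq.le)
    have hg0 : ∀ n, 0 ≤ g n := fun n => add_nonneg
      (mul_nonneg (phi_nonneg hlam0 n) (hF0 n)) (mul_nonneg (psi_nonneg hlam0 n) (hC0 n))
    have hgle : ∀ n, g n ≤ phi lam n * maxOf f + psi lam n * (maxOf c / q) := fun n =>
      add_le_add (mul_le_mul_of_nonneg_left (hF n) (phi_nonneg hlam0 n))
        (mul_le_mul_of_nonneg_left (hC n) (psi_nonneg hlam0 n))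
    have hb : Summable (fun n => phi lam n * maxOf f + psi lam n * (maxOf c / q)) :=
      ((hasSum_phi lam).summable.mul_right _).add ((summable_psi hlam0).mul_right _)
    have hgsum : Summable g := Summable.of_nonneg_of_le hg0 hgle hb
    -- value iteration output equals partial sum
    have hdot := crVI_dot P hP q t c f sch hsch s0 k (k + 1) le_rfl
    simp only [Nat.sub_self] at hdot
    have hq0 : crVI P sch q t c f k (k + 1) s0 = ∑ n ∈ Finset.range (k + 1), g n := by
      have h0 : ∑ s, crProb P sch s0 0 s * crVI P sch q t c f k (k + 1) s
          = crVI P sch q t c f k (k + 1) s0 := by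
        simp [crProb]
      rw [← h0, hdot, ← Finset.range_eq_Ico]
    have hval : value q t c f p = ∑' n, g n := rfl
    have htel := Summable.sum_add_tsum_nat_add (f := g) (k + 1) hgsum
    have hdiff : value q t c f p - crVI P sch q t c f k (k + 1) s0
        = ∑' n, g (n + (k + 1)) := by
      rw [hval, hq0]; linarith
    have htail0 : 0 ≤ ∑' n, g (n + (k + 1)) :=
      tsum_nonneg fun n => hg0 _
    -- tail bounds
    have hbs : Summable (fun n => phi lam (n + (k + 1)) * maxOf f
        + psi lam (n + (k + 1)) * (maxOf c / q)) :=
      ((summable_phi_shift lam (k + 1)).mul_right _).add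
        (((summable_nat_add_iff (k + 1)).2 (summable_psi hlam0)).mul_right _)
    have hgs : Summable (fun n => g (n + (k + 1))) :=
      (summable_nat_add_iff (k + 1)).2 hgsum
    have htail1 : ∑' n, g (n + (k + 1))
        ≤ psi lam k * maxOf f + (∑' n, psi lam (n + (k + 1))) * (maxOf c / q) := by
      calc ∑' n, g (n + (k + 1))
          ≤ ∑' n, (phi lam (n + (k + 1)) * maxOf f + psi lam (n + (k + 1)) * (maxOf c / q)) :=
            Summable.tsum_le_tsum (fun n => hgle _) hgs hbs
        _ = (∑' n, phi lam (n + (k + 1))) * maxOf f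
            + (∑' n, psi lam (n + (k + 1))) * (maxOf c / q) := by
            rw [Summable.tsum_add ((summable_phi_shift lam (k + 1)).mul_right _)
              (((summable_nat_add_iff (k + 1)).2 (summable_psi hlam0)).mul_right _),
              tsum_mul_right, tsum_mul_right]
        _ = psi lam k * maxOf f + (∑' n, psi lam (n + (k + 1))) * (maxOf c / q) := by
            rw [← psi_eq_tsum]
    have hpsitail : ∑' n, psi lam (n + (k + 1)) ≤ lam - ∑ n ∈ Finset.range (k + 1), psi lam n := by
      have h1 := Summable.sum_add_tsum_nat_add (f := psi lam) (k + 1) (summable_psi hlam0)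
      have h2 := tsum_psi_le hlam0
      linarith
    have hpsitail0 : 0 ≤ ∑' n, psi lam (n + (k + 1)) :=
      tsum_nonneg fun n => psi_nonneg hlam0 _
    have hhalf : psi lam k * maxOf f < ε / 2 := hk.2
    have hcterm : (∑' n, psi lam (n + (k + 1))) * (maxOf c / q) < ε / 2 := by
      rcases hMc0.eq_or_lt with hMcz | hMcp
      · rw [← hMcz]
        simp only [zero_div, mul_zero]
        linarith
      · rcases hk.1 with hz | hgt
        · exact absurd hz (ne_of_gt hMcp)
        · have hlt : ∑' n, psi lam (n + (k + 1)) < ε * q / (2 * maxOf c) := by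
            have := hpsitail
            rw [← hlam] at hgt
            linarith
          have hpos : 0 < maxOf c / q := div_pos hMcp hq
          calc (∑' n, psi lam (n + (k + 1))) * (maxOf c / q)
              < (ε * q / (2 * maxOf c)) * (maxOf c / q) :=
                mul_lt_mul_of_pos_right hlt hpos
            _ = ε / 2 := by field_simp
    have htail : ∑' n, g (n + (k + 1)) < ε := by
      have : (∑' n, psi lam (n + (k + 1))) * (maxOf c / q) < ε / 2 := hcterm
      linarith
    constructor
    · rw [abs_sub_comm, abs_of_nonneg (by linarith [hdiff, htail0] : (0:ℝ) ≤ _)]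
      linarith [hdiff, htail]
    · linarith [hdiff, htail0]


end TR
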